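/- For any vertex cover W of a graph G = (V,E), the set obtained by adding to W, for each edge (u,v) ∈ E, one suitably chosen subdivision vertex of the path u - u' - v' - v, is a vertex cover of the 3-subdivision G' of size |W| + |E|. Specifically: if u ∈ W choose v', otherwise choose u'. -/

import Mathlib

/-- `W` is a vertex cover of the simple graph `G`. -/
def IsVertexCover {V : Type*} (G : SimpleGraph V) (W : Finset V) : Prop :=
  ∀ x y, G.Adj x y → x ∈ W ∨ y ∈ W

/-- `W` is a vertex cover of the 3-subdivision `G'` of `G`.  The 3-subdivision replaces
each edge `{u,v}` of `G` by the path `u - u' - v' - v`; we encode the subdivision vertex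
`u'` adjacent to `u` on edge `{u,v}` as `Sum.inr (u, v)`, and the original vertices as
`Sum.inl`.  A vertex cover consists of genuine vertices of `G'` and touches each of the
three edges `(u,u')`, `(u',v')`, `(v',v)` of every subdivided edge. -/
def IsSubdivVertexCover {V : Type*} (G : SimpleGraph V) (W : Finset (V ⊕ V × V)) : Prop :=
  (∀ p : V × V, Sum.inr p ∈ W → G.Adj p.1 p.2) ∧
  ∀ u v, G.Adj u v →
    (Sum.inl u ∈ W ∨ Sum.inr (u, v) ∈ W) ∧
    (Sum.inr (u, v) ∈ W ∨ Sum.inr (v, u) ∈ W) ∧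
    (Sum.inr (v, u) ∈ W ∨ Sum.inl v ∈ W)

/-- Any vertex cover `W` of `G` extends to a vertex cover `W'` of the 3-subdivision of
size `|W| + |E|`, obtained by adding for each edge `{u,v}` one subdivision vertex: `v'`
if `u ∈ W`, else `u'`.  In particular every added subdivision vertex `Sum.inr (x,y)`
(the vertex adjacent to `x` on edge `{x,y}`) has its far endpoint `y` in `W`. -/
theorem subdiv_cover_extend {V : Type*} [Fintype V] (G : SimpleGraph V)
    (W : Finset V) (hW : IsVertexCover G W) :
    ∃ W' : Finset (V ⊕ V × V), IsSubdivVertexCover G W' ∧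
      W'.card = W.card + G.edgeSet.ncard ∧
      (∀ u : V, Sum.inl u ∈ W' ↔ u ∈ W) ∧
      (∀ x y : V, Sum.inr (x, y) ∈ W' → G.Adj x y ∧ y ∈ W) := by
  classical
  -- choose a pair per edge
  set g : Sym2 V → V × V := fun e => if e.out.1 ∈ W then (e.out.2, e.out.1) else e.out with hg
  have hmk : ∀ e : Sym2 V, s((g e).1, (g e).2) = e := by
    intro e
    by_cases h : e.out.1 ∈ W <;> simp [hg, h, Sym2.eq_swap, e.out_eq]
  have hadj : ∀ e ∈ G.edgeFinset, G.Adj (g e).1 (g e).2 := by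
    intro e he
    rw [SimpleGraph.mem_edgeFinset] at he
    have := hmk e
    rw [← SimpleGraph.mem_edgeSet, hmk e]; exact he
  have hsnd : ∀ e ∈ G.edgeFinset, (g e).2 ∈ W := by
    intro e he
    by_cases h : e.out.1 ∈ W
    · simp [hg, h]
    · simp only [hg, h, if_false]
      have hadj' : G.Adj e.out.1 e.out.2 := by
        have := hadj e he
        simpa [hg, h] using this
      rcases hW _ _ hadj' with h1 | h2
      · exact absurd h1 h
      · exact h2
  refine ⟨W.map ⟨Sum.inl, Sum.inl_injective⟩ ∪ G.edgeFinset.image (fun e => Sum.inr (g e)), ?_, ?_, ?_, ?_⟩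
  · constructor
    · intro p hp
      simp only [Finset.mem_union, Finset.mem_map, Finset.mem_image] at hp
      rcases hp with ⟨_, _, h⟩ | ⟨e, he, h⟩
      · simp at h
      · obtain rfl : g e = p := by simpa using h
        exact hadj e he
    · intro u v huv
      have he : s(u, v) ∈ G.edgeFinset := by
        rw [SimpleGraph.mem_edgeFinset]; exact huv
      have hgmem : Sum.inr (g (s(u, v))) ∈
          W.map ⟨Sum.inl, Sum.inl_injective⟩ ∪ G.edgeFinset.image (fun e => Sum.inr (g e)) := by
        simp only [Finset.mem_union, Finset.mem_image]
        exact Or.inr ⟨_, he, rfl⟩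
      have hcases : g (s(u, v)) = (u, v) ∨ g (s(u, v)) = (v, u) := by
        have := hmk (s(u, v))
        replace this := (Sym2.mk_eq_mk_iff (q := (u, v))).1 this
        rcases this with h | h
        · left; exact h
        · right; simpa [Prod.swap] using h
      have hlmem : ∀ w ∈ W, Sum.inl w ∈
          W.map ⟨Sum.inl, Sum.inl_injective⟩ ∪ G.edgeFinset.image (fun e => Sum.inr (g e)) := by
        intro w hw
        simp only [Finset.mem_union, Finset.mem_map]
        exact Or.inl ⟨w, hw, rfl⟩
      refine ⟨?_, ?_, ?_⟩
      · by_cases hu : u ∈ W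
        · exact Or.inl (hlmem u hu)
        · right
          rcases hcases with h | h
          · rw [← h]; exact hgmem
          · exfalso
            have := hsnd _ he
            rw [h] at this
            exact hu this
      · rcases hcases with h | h
        · left; rw [← h]; exact hgmem
        · right; rw [← h]; exact hgmem
      · by_cases hv : v ∈ W
        · exact Or.inr (hlmem v hv)
        · left
          rcases hcases with h | h
          · exfalso
            have := hsnd _ he
            rw [h] at this
            exact hv this
          · rw [← h]; exact hgmem
  · rw [Finset.card_union_of_disjoint, Finset.card_map, Finset.card_image_of_injOn]
    · congr 1
      rw [Set.ncard_eq_toFinset_card']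
      congr 1
    · intro e1 h1 e2 h2 h
      have : g e1 = g e2 := by simpa using h
      rw [← hmk e1, ← hmk e2, this]
    · rw [Finset.disjoint_left]
      rintro a ha hb
      simp only [Finset.mem_map] at ha
      simp only [Finset.mem_image] at hb
      obtain ⟨w, _, rfl⟩ := ha
      obtain ⟨e, _, h⟩ := hb
      exact absurd h (by simp)
  · intro u
    simp
  · intro x y hxy
    simp only [Finset.mem_union, Finset.mem_map, Finset.mem_image] at hxy
    rcases hxy with ⟨_, _, h⟩ | ⟨e, he, h⟩
    · simp at h
    · have hge : g e = (x, y) := by simpa using h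
      have h1 := hadj e he
      have h2 := hsnd e he
      rw [hge] at h1 h2
      exact ⟨h1, h2⟩
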